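/- For every positive integers k, κ, m, r with κ ≤ m there exist integers n₀ and 0 = q₀ < q₁ < ... < q_m = n₀ such that: for every N ≥ n₀, every finite alphabet Λ with k elements, and every r-coloring c of Λ^N × [{0,...,N-1}]^κ, there exists an m-dimensional κ*-combinatorial subspace X, generated by an m-dimensional variable word w whose wildcard set of vᵢ is contained in [qᵢ, q_{i+1}) for each i, such that c is strongly *-insensitive in X. -/

import Mathlib

namespace DR

/-- Substitution of letters into an `m`-dimensional variable word. -/
def subst {N m : ℕ} {Λ : Type} (w : Fin N → Λ ⊕ Fin m) (a : Fin m → Λ) : Fin N → Λ :=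
  fun j => Sum.elim id a (w j)

/-- `w` is an `m`-dimensional variable word of length `N` over `Λ`: every variable occurs
and the wildcard sets are in block position. -/
def IsVarWordM {N m : ℕ} {Λ : Type} (w : Fin N → Λ ⊕ Fin m) : Prop :=
  (∀ i : Fin m, ∃ j, w j = Sum.inr i) ∧
  (∀ (j j' : Fin N) (i i' : Fin m),
    w j = Sum.inr i → w j' = Sum.inr i' → i < i' → j < j')

/-- `j` is the first occurrence `ℓ^w_i` of the variable `v_i` in `w`. -/
def IsFirstOcc {N m : ℕ} {Λ : Type} (w : Fin N → Λ ⊕ Fin m) (i : Fin m) (j : Fin N) : Prop :=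
  w j = Sum.inr i ∧ ∀ j' : Fin N, w j' = Sum.inr i → j ≤ j'

/-- `c` is `L*`-insensitive in the `κ*`-combinatorial subspace generated by `w`. -/
def LStarIns (κ : ℕ) {N m r : ℕ} {Λ : Type}
    (c : (Fin N → Λ) → Finset (Fin N) → Fin r) (L : Set Λ)
    (w : Fin N → Λ ⊕ Fin m) : Prop :=
  ∀ lf : Fin m → Fin N, (∀ i, IsFirstOcc w i (lf i)) →
  ∀ F : Finset (Fin m), F.card = κ →
  ∀ a a' : Fin m → Λ, (∀ i ∈ F, a i = a' i) →
    (∀ j : Fin m, a j ∉ L → a j = a' j) → (∀ j : Fin m, a' j ∉ L → a j = a' j) →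
    c (subst w a) (F.image lf) = c (subst w a') (F.image lf)

/-- `c` is strongly `*`-insensitive in the `κ*`-combinatorial subspace generated by `w`. -/
def StrongStarIns (κ : ℕ) {N m r : ℕ} {Λ : Type}
    (c : (Fin N → Λ) → Finset (Fin N) → Fin r)
    (w : Fin N → Λ ⊕ Fin m) : Prop :=
  ∀ lf : Fin m → Fin N, (∀ i, IsFirstOcc w i (lf i)) →
  ∀ F : Finset (Fin m), F.card = κ →
  ∀ a a' : Fin m → Λ, (∀ i ∈ F, a i = a' i) →
    c (subst w a) (F.image lf) = c (subst w a') (F.image lf)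

/-- The wildcard set of `v_i` in `w` is contained in `[q i, q (i+1))` for each `i`. -/
def Compatible {N m : ℕ} {Λ : Type} (w : Fin N → Λ ⊕ Fin m) (q : Fin (m + 1) → ℕ) : Prop :=
  ∀ (j : Fin N) (i : Fin m), w j = Sum.inr i →
    q i.castSucc ≤ (j : ℕ) ∧ (j : ℕ) < q i.succ

/-- The `κ*`-combinatorial subspace generated by `w`, as a subset of
`Λ^N × [{0,...,N-1}]^κ`. -/
def starSubspace (κ : ℕ) {N m : ℕ} {Λ : Type} (w : Fin N → Λ ⊕ Fin m) :
    Set ((Fin N → Λ) × Finset (Fin N)) :=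
  {p | (∃ a : Fin m → Λ, p.1 = subst w a) ∧
    ∃ F : Finset (Fin m), F.card = κ ∧
      ∃ lf : Fin m → Fin N, (∀ i, IsFirstOcc w i (lf i)) ∧ p.2 = F.image lf}

section Auxiliary

variable {N m : ℕ} {Λ : Type}

theorem isFirstOcc_unique {w : Fin N → Λ ⊕ Fin m} {i : Fin m} {p p' : Fin N}
    (h : IsFirstOcc w i p) (h' : IsFirstOcc w i p') : p = p' :=
  le_antisymm (h.2 p' h'.1) (h'.2 p h.1)

open Classical in
/-- The first occurrence of variable `i` in `w` (junk value if `i` does not occur). -/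
noncomputable def fOcc (hN : 0 < N) (w : Fin N → Λ ⊕ Fin m) (i : Fin m) : Fin N :=
  if h : (Finset.univ.filter (fun p => w p = Sum.inr i)).Nonempty
  then (Finset.univ.filter (fun p => w p = Sum.inr i)).min' h else ⟨0, hN⟩

theorem fOcc_spec (hN : 0 < N) (w : Fin N → Λ ⊕ Fin m) (i : Fin m)
    (h : ∃ p, w p = Sum.inr i) : IsFirstOcc w i (fOcc hN w i) := by
  classical
  obtain ⟨p, hp⟩ := h
  have hne : (Finset.univ.filter (fun p => w p = Sum.inr i)).Nonempty := ⟨p, by simp [hp]⟩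
  rw [fOcc, dif_pos hne]
  constructor
  · have := Finset.min'_mem (Finset.univ.filter (fun p => w p = Sum.inr i)) hne
    simpa using this
  · intro j hj
    exact Finset.min'_le _ _ (by simp [hj])

/-- Substitution into a one-dimensional variable word. -/
def sub1 {N : ℕ} {Λ : Type} (u : Fin N → Λ ⊕ Unit) (b : Λ) : Fin N → Λ :=
  fun j => Sum.elim id (fun _ => b) (u j)

theorem hj_exists (k R : ℕ) (hk : 0 < k) :
    ∃ n : ℕ, ∀ (Λ : Type) [Fintype Λ], Fintype.card Λ = k →
      ∀ (C : Type) [Fintype C], Fintype.card C ≤ R →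
      ∀ N : ℕ, n ≤ N → ∀ c : (Fin N → Λ) → C,
      ∃ u : Fin N → Λ ⊕ Unit, (∃ j, u j = Sum.inr ()) ∧
        ∀ b b' : Λ, c (sub1 u b) = c (sub1 u b') := by
  classical
  obtain ⟨ι, ιfin, hι⟩ := Combinatorics.Line.exists_mono_in_high_dimension (Fin k) (Fin R)
  refine ⟨Fintype.card ι, ?_⟩
  intro Λ _ hΛ C _ hC N hN c
  let e : Fin k ≃ Λ := (Fintype.equivFinOfCardEq hΛ).symm
  obtain ⟨emb⟩ : Nonempty (C ↪ Fin R) :=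
    Function.Embedding.nonempty_of_card_le (by simpa using hC)
  let f : ι ↪ Fin N := (Fintype.equivFin ι).toEmbedding.trans (Fin.castLEEmb hN)
  let finv : Fin N → Option ι := fun j => if h : ∃ i2, f i2 = j then some h.choose else none
  let lam0 : Λ := e ⟨0, hk⟩
  let Cc : (ι → Fin k) → Fin R :=
    fun y => emb (c (fun j => (finv j).elim lam0 (fun i2 => e (y i2))))
  obtain ⟨l, col, hcol⟩ := hι Cc
  let u : Fin N → Λ ⊕ Unit := fun j =>
    (finv j).elim (Sum.inl lam0)
      (fun i2 => ((l.idxFun i2).elim (Sum.inr ()) (fun a => Sum.inl (e a))))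
  have key : ∀ b : Λ,
      (fun j => (finv j).elim lam0 (fun i2 => e ((l (e.symm b)) i2))) = sub1 u b := by
    intro b
    funext j
    show (finv j).elim lam0 (fun i2 => e ((l (e.symm b)) i2)) = Sum.elim id (fun _ => b) (u j)
    cases hj : finv j with
    | none => simp [u, hj]
    | some i2 =>
      cases hi : l.idxFun i2 with
      | none =>
        simp [u, hj, hi, Combinatorics.Line.coe_apply]
      | some a =>
        simp [u, hj, hi, Combinatorics.Line.coe_apply]
  refine ⟨u, ?_, ?_⟩
  · obtain ⟨i0, hi0⟩ := l.proper
    refine ⟨f i0, ?_⟩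
    have hfi : finv (f i0) = some i0 := by
      have hex : ∃ i2, f i2 = f i0 := ⟨i0, rfl⟩
      have hch : f hex.choose = f i0 := hex.choose_spec
      simp only [finv, dif_pos hex]
      exact congrArg some (f.injective hch)
    show (finv (f i0)).elim (Sum.inl lam0) _ = Sum.inr ()
    rw [hfi]
    simp [hi0]
  · intro b b'
    have h1 := hcol (e.symm b)
    have h2 := hcol (e.symm b')
    have h12 : Cc (l (e.symm b)) = Cc (l (e.symm b')) := h1.trans h2.symm
    have h3 : emb (c (sub1 u b)) = emb (c (sub1 u b')) := by
      simpa only [Cc, key b, key b'] using h12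
    exact emb.injective h3

/-- A Hales–Jewett number for alphabet size `k` and `R` colors. -/
noncomputable def hjn (k R : ℕ) : ℕ :=
  if h : 0 < k then (hj_exists k R h).choose else 0

theorem hjn_spec (k R : ℕ) (hk : 0 < k) :
    ∀ (Λ : Type) [Fintype Λ], Fintype.card Λ = k →
      ∀ (C : Type) [Fintype C], Fintype.card C ≤ R →
      ∀ N : ℕ, hjn k R ≤ N → ∀ c : (Fin N → Λ) → C,
      ∃ u : Fin N → Λ ⊕ Unit, (∃ j, u j = Sum.inr ()) ∧
        ∀ b b' : Λ, c (sub1 u b) = c (sub1 u b') := by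
  have e : hjn k R = (hj_exists k R hk).choose := dif_pos hk
  rw [e]
  exact (hj_exists k R hk).choose_spec

/-- The sequence of block endpoints. -/
noncomputable def qseq (k m r : ℕ) : ℕ → ℕ
  | 0 => 0
  | i + 1 => qseq k m r i +
      max 1 (hjn k (r ^ (k ^ (qseq k m r i) * (k ^ m * (2 ^ (qseq k m r i) * 2 ^ m)))))

theorem qseq_zero (k m r : ℕ) : qseq k m r 0 = 0 := rfl

theorem qseq_mono (k m r : ℕ) : StrictMono (qseq k m r) := by
  apply strictMono_nat_of_lt_succ
  intro i
  have h1 : 1 ≤ max 1 (hjn k (r ^ (k ^ (qseq k m r i) * (k ^ m * (2 ^ (qseq k m r i) * 2 ^ m))))) :=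
    le_max_left _ _
  show qseq k m r i < qseq k m r i +
      max 1 (hjn k (r ^ (k ^ (qseq k m r i) * (k ^ m * (2 ^ (qseq k m r i) * 2 ^ m)))))
  omega

/-- Mixing: below threshold `B` use `y`, at or above use the substituted word. -/
def mixW {N m : ℕ} {Λ : Type} (B : ℕ) (y : Fin N → Λ) (w : Fin N → Λ ⊕ Fin m)
    (a : Fin m → Λ) : Fin N → Λ :=
  fun j => if (j : ℕ) < B then y j else Sum.elim id a (w j)

theorem mixW_zero {N m : ℕ} {Λ : Type} (y : Fin N → Λ) (w : Fin N → Λ ⊕ Fin m)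
    (a : Fin m → Λ) : mixW 0 y w a = subst w a := by
  funext j
  simp [mixW, subst]

theorem key_lemma (k m r : ℕ) (hk : 0 < k) (N : ℕ) (hN : qseq k m r m ≤ N)
    (Λ : Type) [Fintype Λ] (hΛ : Fintype.card Λ = k) (lam0 : Λ)
    (c : (Fin N → Λ) → Finset (Fin N) → Fin r) :
    ∀ t : ℕ, t ≤ m →
    ∃ w : Fin N → Λ ⊕ Fin m,
      (∀ j : Fin N, (j : ℕ) < qseq k m r (m - t) → w j = Sum.inl lam0) ∧
      (∀ j : Fin N, qseq k m r m ≤ (j : ℕ) → w j = Sum.inl lam0) ∧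
      (∀ (j : Fin N) (i : Fin m), w j = Sum.inr i →
        m - t ≤ (i : ℕ) ∧ qseq k m r (i : ℕ) ≤ (j : ℕ) ∧ (j : ℕ) < qseq k m r ((i : ℕ) + 1)) ∧
      (∀ i : Fin m, m - t ≤ (i : ℕ) → ∃ j, w j = Sum.inr i) ∧
      (∀ i : Fin m, m - t ≤ (i : ℕ) → ∀ a a' : Fin m → Λ,
        (∀ j : Fin m, j ≠ i → a j = a' j) →
        ∀ y : Fin N → Λ, ∀ T : Finset (Fin N),
        (∀ p ∈ T, (p : ℕ) < qseq k m r (i : ℕ) ∨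
          ∃ j' : Fin m, (i : ℕ) < (j' : ℕ) ∧ IsFirstOcc w j' p) →
        c (mixW (qseq k m r (m - t)) y w a) T = c (mixW (qseq k m r (m - t)) y w a') T) := by
  classical
  intro t
  induction t with
  | zero =>
    intro _
    refine ⟨fun _ => Sum.inl lam0, fun _ _ => rfl, fun _ _ => rfl, ?_, ?_, ?_⟩
    · intro j i h
      simp at h
    · intro i hi
      exact absurd hi (by have := i.isLt; omega)
    · intro i hi
      exact absurd hi (by have := i.isLt; omega)
  | succ t IH =>
    intro ht1
    obtain ⟨w, W1, W4, W2, W3, W5⟩ := IH (by omega)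
    have hQm : Monotone (qseq k m r) := (qseq_mono k m r).monotone
    set Q : ℕ → ℕ := qseq k m r with hQdef
    set i' : ℕ := m - (t + 1) with hi'def
    have hmt : m - t = i' + 1 := by omega
    have hi'm : i' < m := by omega
    set iF : Fin m := ⟨i', hi'm⟩ with hiFdef
    have hiFv : (iF : ℕ) = i' := rfl
    have hN0 : 0 < N := by
      have hQ00 : Q 0 = 0 := rfl
      have h0 : Q 0 < Q m := qseq_mono k m r (by omega)
      omega
    set RB : ℕ := r ^ (k ^ Q i' * (k ^ m * (2 ^ Q i' * 2 ^ m))) with hRB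
    set L : ℕ := max 1 (hjn k RB) with hLdef
    have hblock : Q (i' + 1) = Q i' + L := rfl
    have hQi'N : Q (i' + 1) ≤ N := le_trans (hQm (by omega : i' + 1 ≤ m)) hN
    have hQi'N' : Q i' ≤ N := le_trans (hQm (by omega : i' ≤ m)) hN
    have hQmt : Q (m - t) = Q i' + L := by rw [hmt]; exact hblock
    have hcard : Fintype.card
        (((Fin (Q i') → Λ) × (Fin m → Λ) × Finset (Fin (Q i')) × Finset (Fin m)) → Fin r)
        ≤ RB := by
      apply le_of_eq
      simp only [Fintype.card_fun, Fintype.card_prod, Fintype.card_finset, Fintype.card_fin,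
        hΛ, hRB]
    set emb : Fin (Q i') → Fin N := fun p => ⟨(p : ℕ), lt_of_lt_of_le p.2 hQi'N'⟩ with hemb
    set lw : Fin m → Fin N := fOcc hN0 w with hlw
    set asb : (Fin L → Λ) → (Fin m → Λ) → (Fin (Q i') → Λ) → Fin N → Λ :=
      fun x a y j =>
        if h1 : (j : ℕ) < Q i' then y ⟨j, h1⟩
        else if h2 : (j : ℕ) < Q i' + L then x ⟨(j : ℕ) - Q i', by omega⟩
        else Sum.elim id a (w j)
      with hasb
    set chi : (Fin L → Λ) →
        (((Fin (Q i') → Λ) × (Fin m → Λ) × Finset (Fin (Q i')) × Finset (Fin m)) → Fin r) :=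
      fun x p => c (asb x p.2.1 p.1) ((p.2.2.1).image emb ∪ (p.2.2.2).image lw) with hchi
    obtain ⟨u, hu_wild, hu_mono⟩ :=
      hjn_spec k RB hk Λ hΛ _ hcard L (le_max_right _ _) chi
    set w' : Fin N → Λ ⊕ Fin m := fun j =>
      if h1 : (j : ℕ) < Q i' then Sum.inl lam0
      else if h2 : (j : ℕ) < Q i' + L then
        Sum.elim Sum.inl (fun _ => Sum.inr iF) (u ⟨(j : ℕ) - Q i', by omega⟩)
      else w j
      with hw'
    have hW1' : ∀ p : Fin N, (p : ℕ) < Q i' + L → w p = Sum.inl lam0 := by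
      intro p hp
      exact W1 p (by rw [hQmt]; exact hp)
    have hww' : ∀ j : Fin N, Q i' + L ≤ (j : ℕ) → w' j = w j := by
      intro j hj
      simp only [hw']
      rw [dif_neg (by omega), dif_neg (by omega)]
    have hsplit : ∀ p : Fin N,
        ((p : ℕ) < Q i' ∧ w p = Sum.inl lam0 ∧ w' p = Sum.inl lam0) ∨
        (Q i' ≤ (p : ℕ) ∧ (p : ℕ) < Q i' + L ∧ w p = Sum.inl lam0 ∧
          ((∃ b, w' p = Sum.inl b) ∨ w' p = Sum.inr iF)) ∨
        (Q i' + L ≤ (p : ℕ) ∧ w' p = w p) := by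
      intro p
      rcases Nat.lt_or_ge ((p : ℕ)) (Q i') with h1 | h1
      · refine Or.inl ⟨h1, hW1' p (by omega), ?_⟩
        simp only [hw', dif_pos h1]
      · rcases Nat.lt_or_ge ((p : ℕ)) (Q i' + L) with h2 | h2
        · refine Or.inr (Or.inl ⟨h1, h2, hW1' p h2, ?_⟩)
          have hpf : (p : ℕ) - Q i' < L := by omega
          have hv : w' p = Sum.elim Sum.inl (fun _ => Sum.inr iF)
              (u ⟨(p : ℕ) - Q i', hpf⟩) := by
            simp only [hw', dif_neg (not_lt.mpr h1), dif_pos h2]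
          rw [hv]
          cases u ⟨(p : ℕ) - Q i', hpf⟩ with
          | inl b => exact Or.inl ⟨b, rfl⟩
          | inr u0 => exact Or.inr rfl
        · exact Or.inr (Or.inr ⟨h2, hww' p h2⟩)
    have hocc : ∀ (j2 : Fin m), j2 ≠ iF → ∀ p : Fin N,
        (w' p = Sum.inr j2 ↔ w p = Sum.inr j2) := by
      intro j2 hj2 p
      rcases hsplit p with ⟨_, hwp, hw'p⟩ | ⟨_, _, hwp, hw'p⟩ | ⟨_, heq⟩
      · rw [hwp, hw'p]
      · constructor
        · intro h
          rcases hw'p with ⟨b, hb⟩ | hb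
          · rw [hb] at h
            exact nomatch h
          · rw [hb] at h
            injection h with h'
            exact absurd h'.symm hj2
        · intro h
          rw [hwp] at h
          exact nomatch h
      · rw [heq]
    have hfo : ∀ (j2 : Fin m), j2 ≠ iF → ∀ p : Fin N,
        (IsFirstOcc w' j2 p ↔ IsFirstOcc w j2 p) := by
      intro j2 hj2 p
      unfold IsFirstOcc
      constructor
      · rintro ⟨ha, hb⟩
        exact ⟨(hocc j2 hj2 p).1 ha, fun p2 hp2 => hb p2 ((hocc j2 hj2 p2).2 hp2)⟩
      · rintro ⟨ha, hb⟩
        exact ⟨(hocc j2 hj2 p).2 ha, fun p2 hp2 => hb p2 ((hocc j2 hj2 p2).1 hp2)⟩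
    refine ⟨w', ?_, ?_, ?_, ?_, ?_⟩
    · -- W1
      intro j hj
      simp only [hw']
      rw [dif_pos hj]
    · -- W4
      intro j hj
      have hle : Q (i' + 1) ≤ Q m := hQm (by omega)
      rw [hblock] at hle
      simp only [hw']
      rw [dif_neg (by omega), dif_neg (by omega)]
      exact W4 j hj
    · -- W2
      intro j i hj
      rcases hsplit j with ⟨_, _, hw'j⟩ | ⟨hge, hlt2, _, hw'j⟩ | ⟨_, heq⟩
      · rw [hw'j] at hj
        exact nomatch hj
      · rcases hw'j with ⟨b, hb⟩ | hb
        · rw [hb] at hj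
          exact nomatch hj
        · rw [hb] at hj
          injection hj with h'
          have hiv : (i : ℕ) = i' := by rw [← h']
          refine ⟨by omega, by rw [hiv]; exact hge, ?_⟩
          rw [hiv, hblock]
          exact hlt2
      · rw [heq] at hj
        have hb := W2 j i hj
        exact ⟨by omega, hb.2⟩
    · -- W3
      intro i hi
      by_cases hieq : i = iF
      · subst hieq
        obtain ⟨j0, hj0⟩ := hu_wild
        have hj0L : (j0 : ℕ) < L := j0.2
        have hlt : Q i' + (j0 : ℕ) < N := by
          rw [hblock] at hQi'N
          omega
        refine ⟨⟨Q i' + (j0 : ℕ), hlt⟩, ?_⟩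
        have hc1 : ¬ (((⟨Q i' + (j0 : ℕ), hlt⟩ : Fin N) : ℕ) < Q i') := by
          show ¬ (Q i' + (j0 : ℕ) < Q i')
          omega
        have hc2 : ((⟨Q i' + (j0 : ℕ), hlt⟩ : Fin N) : ℕ) < Q i' + L := by
          show Q i' + (j0 : ℕ) < Q i' + L
          omega
        have hpf : ((⟨Q i' + (j0 : ℕ), hlt⟩ : Fin N) : ℕ) - Q i' < L := by
          show Q i' + (j0 : ℕ) - Q i' < L
          omega
        have hv : w' ⟨Q i' + (j0 : ℕ), hlt⟩ = Sum.elim Sum.inl (fun _ => Sum.inr iF)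
            (u ⟨((⟨Q i' + (j0 : ℕ), hlt⟩ : Fin N) : ℕ) - Q i', hpf⟩) := by
          simp only [hw', dif_neg hc1, dif_pos hc2]
        rw [hv]
        have hidx : (⟨((⟨Q i' + (j0 : ℕ), hlt⟩ : Fin N) : ℕ) - Q i', hpf⟩ : Fin L) = j0 :=
          Fin.ext (by show Q i' + (j0 : ℕ) - Q i' = (j0 : ℕ); omega)
        rw [hidx, hj0]
        rfl
      · have hne : (i : ℕ) ≠ i' := fun h => hieq (Fin.ext h)
        have hge : m - t ≤ (i : ℕ) := by omega
        obtain ⟨j, hj⟩ := W3 i hge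
        refine ⟨j, ?_⟩
        have hb := W2 j i hj
        have hQle : Q (i' + 1) ≤ Q (i : ℕ) := hQm (by omega)
        rw [hblock] at hQle
        simp only [hw']
        rw [dif_neg (by omega), dif_neg (by omega)]
        exact hj
    · -- W5
      intro i hi a a' hdiff y T hT
      by_cases hieq : i = iF
      · subst hieq
        rw [hiFv] at hT
        set T1 : Finset (Fin (Q i')) := Finset.univ.filter (fun p => emb p ∈ T) with hT1
        set T2 : Finset (Fin m) := Finset.univ.filter
          (fun j2 => i' < (j2 : ℕ) ∧ lw j2 ∈ T ∧ ∃ p2, w p2 = Sum.inr j2) with hT2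
        have hTeq : T1.image emb ∪ T2.image lw = T := by
          ext p
          simp only [Finset.mem_union, Finset.mem_image, hT1, hT2, Finset.mem_filter,
            Finset.mem_univ, true_and]
          constructor
          · rintro (⟨p0, hp0, rfl⟩ | ⟨j2, ⟨_, hj2, _⟩, rfl⟩)
            · exact hp0
            · exact hj2
          · intro hp
            rcases hT p hp with hlow | ⟨j2, hj2gt, hfo2⟩
            · left
              refine ⟨⟨(p : ℕ), hlow⟩, ?_, Fin.ext rfl⟩
              have hpe : emb ⟨(p : ℕ), hlow⟩ = p := Fin.ext rfl
              rw [hpe]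
              exact hp
            · right
              have hne2 : j2 ≠ iF := by
                intro h
                rw [h, hiFv] at hj2gt
                exact lt_irrefl _ hj2gt
              have hfo3 : IsFirstOcc w j2 p := (hfo j2 hne2 p).1 hfo2
              have hex : ∃ p2, w p2 = Sum.inr j2 := ⟨p, hfo3.1⟩
              have hfl : IsFirstOcc w j2 (lw j2) := fOcc_spec hN0 w j2 hex
              have hpl : p = lw j2 := isFirstOcc_unique hfo3 hfl
              refine ⟨j2, ⟨hj2gt, ?_, hex⟩, hpl.symm⟩
              rw [← hpl]
              exact hp
        have hasm : ∀ aa : Fin m → Λ,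
            asb (sub1 u (aa iF)) aa (fun p0 => y (emb p0)) = mixW (Q i') y w' aa := by
          intro aa
          funext j
          rcases Nat.lt_or_ge ((j : ℕ)) (Q i') with h1 | h1
          · have l1 : asb (sub1 u (aa iF)) aa (fun p0 => y (emb p0)) j = y (emb ⟨(j : ℕ), h1⟩) := by
              simp only [hasb, dif_pos h1]
            have r1 : mixW (Q i') y w' aa j = y j := by
              simp only [mixW, if_pos h1]
            rw [l1, r1]
          · rcases Nat.lt_or_ge ((j : ℕ)) (Q i' + L) with h2 | h2
            · have hpf : (j : ℕ) - Q i' < L := by omega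
              have l1 : asb (sub1 u (aa iF)) aa (fun p0 => y (emb p0)) j
                  = sub1 u (aa iF) ⟨(j : ℕ) - Q i', hpf⟩ := by
                simp only [hasb, dif_neg (not_lt.mpr h1), dif_pos h2]
              have r1 : mixW (Q i') y w' aa j
                  = Sum.elim id aa (Sum.elim Sum.inl (fun _ => Sum.inr iF)
                      (u ⟨(j : ℕ) - Q i', hpf⟩)) := by
                simp only [mixW, if_neg (not_lt.mpr h1), hw',
                  dif_neg (not_lt.mpr h1), dif_pos h2]
              rw [l1, r1, sub1]
              cases u ⟨(j : ℕ) - Q i', hpf⟩ with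
              | inl b => rfl
              | inr u0 => rfl
            · have l1 : asb (sub1 u (aa iF)) aa (fun p0 => y (emb p0)) j
                  = Sum.elim id aa (w j) := by
                simp only [hasb, dif_neg (not_lt.mpr h1), dif_neg (not_lt.mpr h2)]
              have r1 : mixW (Q i') y w' aa j = Sum.elim id aa (w' j) := by
                simp only [mixW, if_neg (not_lt.mpr h1)]
              rw [l1, r1, hww' j h2]
        have e1 : c (mixW (Q i') y w' a) T =
            chi (sub1 u (a iF)) ((fun p0 => y (emb p0)), a, T1, T2) := by
          simp only [hchi]
          rw [hasm a, hTeq]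
        have e2 := congrFun (hu_mono (a iF) (a' iF)) ((fun p0 => y (emb p0)), a, T1, T2)
        have e3 : chi (sub1 u (a' iF)) ((fun p0 => y (emb p0)), a, T1, T2) =
            c (mixW (Q i') y w' a') T := by
          simp only [hchi]
          rw [hTeq]
          have hswap : asb (sub1 u (a' iF)) a (fun p0 => y (emb p0)) =
              asb (sub1 u (a' iF)) a' (fun p0 => y (emb p0)) := by
            funext j
            rcases Nat.lt_or_ge ((j : ℕ)) (Q i') with h1 | h1
            · simp only [hasb, dif_pos h1]
            · rcases Nat.lt_or_ge ((j : ℕ)) (Q i' + L) with h2 | h2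
              · simp only [hasb, dif_neg (not_lt.mpr h1), dif_pos h2]
              · simp only [hasb, dif_neg (not_lt.mpr h1), dif_neg (not_lt.mpr h2)]
                cases hwj : w j with
                | inl b => rfl
                | inr j2 =>
                  have hge := (W2 j j2 hwj).1
                  have hne2 : j2 ≠ iF := by
                    intro h
                    rw [h, hiFv] at hge
                    omega
                  simp only [Sum.elim_inr]
                  exact hdiff j2 hne2
          rw [hswap, hasm a']
        exact (e1.trans e2).trans e3
      · have hne : (i : ℕ) ≠ i' := fun h => hieq (Fin.ext h)
        have hmi : m - t ≤ (i : ℕ) := by omega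
        have hTcond : ∀ p ∈ T, (p : ℕ) < Q (i : ℕ) ∨
            ∃ j2 : Fin m, (i : ℕ) < (j2 : ℕ) ∧ IsFirstOcc w j2 p := by
          intro p hp
          rcases hT p hp with h | ⟨j2, hgt, hf⟩
          · exact Or.inl h
          · refine Or.inr ⟨j2, hgt, ?_⟩
            have hne2 : j2 ≠ iF := by
              intro h
              rw [h, hiFv] at hgt
              omega
            exact (hfo j2 hne2 p).1 hf
        have hold := W5 i hmi a a' hdiff (mixW (Q i') y w' a) T hTcond
        have hA : mixW (Q (m - t)) (mixW (Q i') y w' a) w a = mixW (Q i') y w' a := by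
          funext j
          show (if (j : ℕ) < Q (m - t) then mixW (Q i') y w' a j else Sum.elim id a (w j))
              = mixW (Q i') y w' a j
          rcases Nat.lt_or_ge ((j : ℕ)) (Q (m - t)) with h | h
          · rw [if_pos h]
          · rw [if_neg (not_lt.mpr h)]
            rw [hQmt] at h
            show Sum.elim id a (w j) = (if (j : ℕ) < Q i' then y j else Sum.elim id a (w' j))
            rw [if_neg (by omega), hww' j h]
        have hB : mixW (Q (m - t)) (mixW (Q i') y w' a) w a' = mixW (Q i') y w' a' := by
          funext j
          show (if (j : ℕ) < Q (m - t) then mixW (Q i') y w' a j else Sum.elim id a' (w j))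
              = mixW (Q i') y w' a' j
          rcases Nat.lt_or_ge ((j : ℕ)) (Q i') with h1 | h1
          · rw [if_pos (by rw [hQmt]; omega)]
            show (if (j : ℕ) < Q i' then y j else Sum.elim id a (w' j))
                = (if (j : ℕ) < Q i' then y j else Sum.elim id a' (w' j))
            rw [if_pos h1, if_pos h1]
          · rcases Nat.lt_or_ge ((j : ℕ)) (Q (m - t)) with h2 | h2
            · rw [if_pos h2]
              show (if (j : ℕ) < Q i' then y j else Sum.elim id a (w' j))
                  = (if (j : ℕ) < Q i' then y j else Sum.elim id a' (w' j))
              rw [if_neg (not_lt.mpr h1), if_neg (not_lt.mpr h1)]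
              rw [hQmt] at h2
              have hpf : (j : ℕ) - Q i' < L := by omega
              have hv : w' j = Sum.elim Sum.inl (fun _ => Sum.inr iF)
                  (u ⟨(j : ℕ) - Q i', hpf⟩) := by
                simp only [hw', dif_neg (not_lt.mpr h1), dif_pos h2]
              rw [hv]
              cases u ⟨(j : ℕ) - Q i', hpf⟩ with
              | inl b => rfl
              | inr u0 =>
                simp only [Sum.elim_inr]
                exact hdiff iF (fun h => hieq h.symm)
            · rw [if_neg (not_lt.mpr h2)]
              rw [hQmt] at h2
              show Sum.elim id a' (w j) = (if (j : ℕ) < Q i' then y j else Sum.elim id a' (w' j))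
              rw [if_neg (by omega), hww' j h2]
        rw [← hA, ← hB]
        exact hold

end Auxiliary

/-- **Starred Hales–Jewett theorem** (Theorem 2.4 of the paper). -/
theorem hales_jewett_star (k κ m r : ℕ) (hk : 0 < k) (hκ : 0 < κ) (hm : 0 < m)
    (hr : 0 < r) (hκm : κ ≤ m) :
    ∃ (n₀ : ℕ) (q : Fin (m + 1) → ℕ), 0 < n₀ ∧ StrictMono q ∧
      q 0 = 0 ∧ q (Fin.last m) = n₀ ∧
      ∀ N : ℕ, n₀ ≤ N → ∀ (Λ : Type) [Fintype Λ], Fintype.card Λ = k →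
        ∀ c : (Fin N → Λ) → Finset (Fin N) → Fin r,
        ∃ w : Fin N → Λ ⊕ Fin m, IsVarWordM w ∧ Compatible w q ∧
          StrongStarIns κ c w := by
  classical
  refine ⟨qseq k m r m, fun i => qseq k m r (i : ℕ), ?_, ?_, ?_, ?_, ?_⟩
  · have h0 : qseq k m r 0 < qseq k m r m := qseq_mono k m r hm
    rw [qseq_zero] at h0
    exact h0
  · intro i j hij
    exact qseq_mono k m r hij
  · simp [qseq_zero]
  · simp [Fin.val_last]
  · intro N hN Λ instΛ hΛ c
    obtain ⟨lam0⟩ : Nonempty Λ := Fintype.card_pos_iff.mp (by rw [hΛ]; exact hk)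
    obtain ⟨w, W1, W4, W2, W3, W5⟩ := key_lemma k m r hk N hN Λ hΛ lam0 c m le_rfl
    refine ⟨w, ⟨fun i => W3 i (by omega), ?_⟩, ?_, ?_⟩
    · intro j j' i i2 hj hj2 hlt
      have h1 := (W2 j i hj).2.2
      have h2 := (W2 j' i2 hj2).2.1
      have hv : (i : ℕ) < (i2 : ℕ) := hlt
      have h3 : qseq k m r ((i : ℕ) + 1) ≤ qseq k m r ((i2 : ℕ)) :=
        (qseq_mono k m r).monotone (by omega)
      show (j : ℕ) < (j' : ℕ)
      omega
    · intro j i hj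
      have hb := W2 j i hj
      exact ⟨by simpa using hb.2.1, by simpa using hb.2.2⟩
    · intro lf hlf F hF a a' hagree
      have chain : ∀ D : Finset (Fin m), (∀ i ∈ D, i ∉ F) →
          ∀ b b' : Fin m → Λ, (∀ j, j ∉ D → b j = b' j) →
          c (subst w b) (F.image lf) = c (subst w b') (F.image lf) := by
        intro D
        induction D using Finset.induction_on with
        | empty =>
          intro _ b b' hb
          have hbb : b = b' := funext fun j => hb j (Finset.notMem_empty j)
          rw [hbb]
        | @insert i D hiD IH =>
          intro hDF b b' hb
          have hiF : i ∉ F := hDF i (Finset.mem_insert_self i D)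
          have hcond : ∀ p ∈ F.image lf, (p : ℕ) < qseq k m r (i : ℕ) ∨
              ∃ j' : Fin m, (i : ℕ) < (j' : ℕ) ∧ IsFirstOcc w j' p := by
            intro p hp
            obtain ⟨j', hj'F, rfl⟩ := Finset.mem_image.mp hp
            rcases lt_trichotomy ((j' : ℕ)) ((i : ℕ)) with h | h | h
            · left
              have hw' := (W2 (lf j') j' (hlf j').1).2.2
              exact lt_of_lt_of_le hw' ((qseq_mono k m r).monotone (by omega))
            · exact absurd (by rw [← Fin.ext h]; exact hj'F : i ∈ F) hiF
            · exact Or.inr ⟨j', h, hlf j'⟩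
          have step1 : c (subst w b) (F.image lf) =
              c (subst w (Function.update b i (b' i))) (F.image lf) := by
            have h5 := W5 i (by omega) b (Function.update b i (b' i))
              (fun j hj => (Function.update_of_ne hj _ _).symm)
              (fun _ => lam0) (F.image lf) hcond
            simpa only [Nat.sub_self, qseq_zero, mixW_zero] using h5
          have step2 : c (subst w (Function.update b i (b' i))) (F.image lf) =
              c (subst w b') (F.image lf) := by
            apply IH (fun i2 hi2 => hDF i2 (Finset.mem_insert_of_mem hi2))
            intro j hj
            by_cases hji : j = i
            · subst hji
              simp
            · rw [Function.update_of_ne hji]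
              exact hb j (by simp [hji, hj])
          exact step1.trans step2
      exact chain (Finset.univ.filter (fun j => j ∉ F))
        (fun i hi => (Finset.mem_filter.mp hi).2) a a'
        (fun j hj => hagree j (by simpa using hj))


end DR
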